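/- The softmax function is 1-Lipschitz as a map from (ℝ^L, ℓ∞) to (ℝ^L, ℓ1): for every h, ĥ ∈ ℝ^L, Σ_{y=1}^L |softmax(h)_y − softmax(ĥ)_y| ≤ max_{y∈[L]} |h_y − ĥ_y|. -/

import Mathlib

noncomputable section

lemma frac_mono {x x' y y' : ℝ} (hx : 0 ≤ x) (hxx' : x ≤ x') (hy' : 0 ≤ y')
    (hyy' : y' ≤ y) (hxy : 0 < x + y) (hxy' : 0 < x' + y') :
    x / (x + y) ≤ x' / (x' + y') := by
  rw [div_le_div_iff₀ hxy hxy']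
  nlinarith [mul_nonneg (sub_nonneg.2 hxx') hy',
    mul_nonneg (le_trans hx hxx') (sub_nonneg.2 hyy')]

lemma step_b_aux (A B c : ℝ) (hA : 0 ≤ A) (hB : 0 ≤ B) (hc : 1 ≤ c) :
    (A * (A + c ^ 2 * B) - (A + B) * A) * (c + 1) ≤ (c - 1) * ((A + B) * (A + c ^ 2 * B)) := by
  nlinarith [mul_nonneg (sub_nonneg.2 hc) (sq_nonneg (A - c * B))]

lemma tanh_aux (x : ℝ) (hx : 0 ≤ x) : 2 * (Real.exp x - 1) ≤ x * (Real.exp x + 1) := by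
  have hmono : MonotoneOn (fun t : ℝ => t * (Real.exp t + 1) - 2 * (Real.exp t - 1)) (Set.Ici 0) := by
    have hder : ∀ t : ℝ, HasDerivAt (fun t : ℝ => t * (Real.exp t + 1) - 2 * (Real.exp t - 1))
        (t * Real.exp t - Real.exp t + 1) t := by
      intro t
      have h1 := (hasDerivAt_id t).mul ((Real.hasDerivAt_exp t).add_const 1)
      have h2 := ((Real.hasDerivAt_exp t).sub_const 1).const_mul (2:ℝ)
      exact (h1.sub h2).congr_deriv (by simp only [id]; ring)
    apply monotoneOn_of_deriv_nonneg (convex_Ici 0)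
    · exact Continuous.continuousOn (by fun_prop)
    · exact fun t _ => (hder t).differentiableAt.differentiableWithinAt
    · intro t ht
      rw [(hder t).deriv]
      have ht0 : 0 ≤ t := le_of_lt (by simpa using ht)
      have h3 : Real.exp t * (1 - t) ≤ 1 := by
        have h4 := Real.add_one_le_exp (-t)
        have h5 : Real.exp t * Real.exp (-t) = 1 := by
          rw [← Real.exp_add]; simp
        nlinarith [Real.exp_pos t]
      nlinarith
  have := hmono Set.self_mem_Ici (Set.mem_Ici.2 hx) hx
  simp only [Real.exp_zero] at this
  nlinarith


/-- Softmax function `softmax(h)_y = e^{h_y} / ∑_z e^{h_z}`. -/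
def softmax {L : ℕ} (h : Fin L → ℝ) : Fin L → ℝ :=
  fun y => Real.exp (h y) / ∑ z, Real.exp (h z)

set_option maxHeartbeats 800000

/-- Softmax is `1`-Lipschitz from `(ℝ^L, ℓ∞)` to `(ℝ^L, ℓ1)`:
`∑_y |softmax(h)_y - softmax(h')_y| ≤ max_y |h_y - h'_y|`. -/
theorem softmax_lipschitz {L : ℕ} (hL : 0 < L) (h h' : Fin L → ℝ) :
    ∑ y, |softmax h y - softmax h' y| ≤
      Finset.univ.sup' ⟨⟨0, hL⟩, Finset.mem_univ _⟩ (fun y => |h y - h' y|) := by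
  have hne : (Finset.univ : Finset (Fin L)).Nonempty := ⟨⟨0, hL⟩, Finset.mem_univ _⟩
  set ε : ℝ := Finset.univ.sup' ⟨⟨0, hL⟩, Finset.mem_univ _⟩ (fun y => |h y - h' y|) with hεdef
  have hεy : ∀ y, |h y - h' y| ≤ ε := by
    intro y; rw [hεdef]; exact Finset.le_sup' (fun y => |h y - h' y|) (Finset.mem_univ y)
  have hε0 : 0 ≤ ε := le_trans (abs_nonneg _) (hεy ⟨0, hL⟩)
  set c : ℝ := Real.exp ε with hcdef
  have hc1 : 1 ≤ c := by
    rw [hcdef]; simpa using Real.exp_le_exp.2 hε0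
  -- sums of exps
  have hT : 0 < ∑ z, Real.exp (h z) := Finset.sum_pos (fun i _ => Real.exp_pos _) hne
  have hT' : 0 < ∑ z, Real.exp (h' z) := Finset.sum_pos (fun i _ => Real.exp_pos _) hne
  -- softmax sums to 1
  have hsum1 : ∑ y, softmax h y = 1 := by
    simp only [softmax, ← Finset.sum_div]; exact div_self hT.ne'
  have hsum1' : ∑ y, softmax h' y = 1 := by
    simp only [softmax, ← Finset.sum_div]; exact div_self hT'.ne'
  set S : Finset (Fin L) := Finset.univ.filter (fun y => softmax h' y ≤ softmax h y) with hSdef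
  -- step 1 : sum of abs = 2 * sum over S of (p - q)
  have step1 : ∑ y, |softmax h y - softmax h' y|
      = 2 * ∑ y ∈ S, (softmax h y - softmax h' y) := by
    have hsplit := Finset.sum_filter_add_sum_filter_not Finset.univ
      (fun y => softmax h' y ≤ softmax h y) (fun y => |softmax h y - softmax h' y|)
    rw [← hSdef] at hsplit
    have h1 : ∑ y ∈ S, |softmax h y - softmax h' y| = ∑ y ∈ S, (softmax h y - softmax h' y) := by
      apply Finset.sum_congr rfl
      intro y hy
      rw [hSdef, Finset.mem_filter] at hy
      exact abs_of_nonneg (by linarith [hy.2])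
    have h2 : ∑ y ∈ Finset.univ.filter (fun y => ¬ softmax h' y ≤ softmax h y),
        |softmax h y - softmax h' y|
        = ∑ y ∈ Finset.univ.filter (fun y => ¬ softmax h' y ≤ softmax h y),
          (softmax h' y - softmax h y) := by
      apply Finset.sum_congr rfl
      intro y hy
      rw [Finset.mem_filter] at hy
      rw [abs_sub_comm]
      exact abs_of_nonneg (by linarith [le_of_not_ge hy.2])
    have h3 := Finset.sum_filter_add_sum_filter_not Finset.univ
      (fun y => softmax h' y ≤ softmax h y) (fun y => softmax h y - softmax h' y)
    rw [← hSdef] at h3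
    simp only [Finset.sum_sub_distrib] at h3
    rw [hsum1, hsum1'] at h3
    rw [← hsplit, h1, h2]
    simp only [Finset.sum_sub_distrib]
    linarith
  -- abbreviations
  set A : ℝ := ∑ y ∈ S, Real.exp (h y) with hAdef
  set B : ℝ := ∑ y ∈ Sᶜ, Real.exp (h y) with hBdef
  set A' : ℝ := ∑ y ∈ S, Real.exp (h' y) with hA'def
  set B' : ℝ := ∑ y ∈ Sᶜ, Real.exp (h' y) with hB'def
  have hA0 : 0 ≤ A := Finset.sum_nonneg fun i _ => (Real.exp_pos _).le
  have hB0 : 0 ≤ B := Finset.sum_nonneg fun i _ => (Real.exp_pos _).le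
  have hA'0 : 0 ≤ A' := Finset.sum_nonneg fun i _ => (Real.exp_pos _).le
  have hB'0 : 0 ≤ B' := Finset.sum_nonneg fun i _ => (Real.exp_pos _).le
  have hAB : A + B = ∑ z, Real.exp (h z) := by
    rw [hAdef, hBdef]; exact Finset.sum_add_sum_compl S _
  have hAB' : A' + B' = ∑ z, Real.exp (h' z) := by
    rw [hA'def, hB'def]; exact Finset.sum_add_sum_compl S _
  have hABpos : 0 < A + B := by rw [hAB]; exact hT
  have hAB'pos : 0 < A' + B' := by rw [hAB']; exact hT'
  -- pointwise exp bounds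
  have hexp1 : ∀ y : Fin L, Real.exp (h y) ≤ c * Real.exp (h' y) := by
    intro y
    rw [hcdef, ← Real.exp_add]
    apply Real.exp_le_exp.2
    have := hεy y
    have := abs_le.1 this
    linarith [this.2]
  have hexp2 : ∀ y : Fin L, Real.exp (h' y) ≤ c * Real.exp (h y) := by
    intro y
    rw [hcdef, ← Real.exp_add]
    apply Real.exp_le_exp.2
    have := abs_le.1 (hεy y)
    linarith [this.1]
  have hAcA' : A ≤ c * A' := by
    rw [hAdef, hA'def, Finset.mul_sum]
    exact Finset.sum_le_sum fun i _ => hexp1 i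
  have hB'cB : B' ≤ c * B := by
    rw [hB'def, hBdef, Finset.mul_sum]
    exact Finset.sum_le_sum fun i _ => hexp2 i
  -- sums over S as fractions
  have hpS : ∑ y ∈ S, softmax h y = A / (A + B) := by
    rw [hAB]
    simp only [softmax, ← Finset.sum_div]
    rfl
  have hqS : ∑ y ∈ S, softmax h' y = A' / (A' + B') := by
    rw [hAB']
    simp only [softmax, ← Finset.sum_div]
    rfl
  -- key inequality
  have hc0 : (0:ℝ) < c := lt_of_lt_of_le one_pos hc1
  have hden2 : 0 < A + c ^ 2 * B := by nlinarith
  have hAeq : A / c / (A / c + c * B) = A / (A + c ^ 2 * B) := by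
    rw [div_div]
    congr 1
    field_simp
  have hdenc : A / c + c * B = (A + c ^ 2 * B) / c := by
    field_simp
  have key : A / (A + B) - A' / (A' + B') ≤ (c - 1) / (c + 1) := by
    have step_a : A / (A + c ^ 2 * B) ≤ A' / (A' + B') := by
      rw [← hAeq]
      apply frac_mono (by positivity) ?_ hB'0 hB'cB ?_ hAB'pos
      · rw [div_le_iff₀ hc0, mul_comm]
        exact hAcA'
      · rw [hdenc]
        exact div_pos hden2 hc0
    have step_b : A / (A + B) - A / (A + c ^ 2 * B) ≤ (c - 1) / (c + 1) := by
      rw [div_sub_div _ _ hABpos.ne' hden2.ne',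
        div_le_div_iff₀ (mul_pos hABpos hden2) (by positivity)]
      exact step_b_aux A B c hA0 hB0 hc1
    linarith
  have tanh : 2 * ((c - 1) / (c + 1)) ≤ ε := by
    have h7 := tanh_aux ε hε0
    rw [← hcdef] at h7
    rw [mul_div_assoc', div_le_iff₀ (by positivity : (0:ℝ) < c + 1)]
    linarith
  rw [step1, Finset.sum_sub_distrib, hpS, hqS]
  linarith
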